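/- arXiv:2009.10274 — 2 statements merged into one kernel-verified Lean document; each statement's English description precedes it below -/
import Mathlib

section
/- For positive definite matrices A, B and t ∈ [0,1], d(A, A ♮_t B) = t·d(A,B) and d(B, A ♮_t B) = (1−t)·d(A,B), where d(X,Y) = 2‖log(X^{-1} # Y)‖ and A ♮_t B = (A^{-1} # B)^t A (A^{-1} # B)^t. -/
open scoped Matrix.Norms.L2Operator ComplexOrder

variable {n : Type*} [Fintype n] [DecidableEq n]

/-- Real power of a (Hermitian) matrix via the continuous functional calculus. -/
noncomputable def mpow (A : Matrix n n ℂ) (t : ℝ) : Matrix n n ℂ :=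
  cfc (fun x : ℝ => x ^ t) A

/-- Matrix logarithm via the continuous functional calculus. -/
noncomputable def mlog (A : Matrix n n ℂ) : Matrix n n ℂ :=
  cfc Real.log A

/-- The geometric mean `A # B = A^{1/2} (A^{-1/2} B A^{-1/2})^{1/2} A^{1/2}`. -/
noncomputable def geo (A B : Matrix n n ℂ) : Matrix n n ℂ :=
  mpow A (1/2) * mpow (mpow A (-(1/2)) * B * mpow A (-(1/2))) (1/2) * mpow A (1/2)

/-- The weighted geometric mean `A #ₜ B = A^{1/2} (A^{-1/2} B A^{-1/2})^t A^{1/2}`. -/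
noncomputable def wgeo (t : ℝ) (A B : Matrix n n ℂ) : Matrix n n ℂ :=
  mpow A (1/2) * mpow (mpow A (-(1/2)) * B * mpow A (-(1/2))) t * mpow A (1/2)

/-- The weighted spectral geometric mean `A ♮ₜ B = (A⁻¹ # B)^t A (A⁻¹ # B)^t`. -/
noncomputable def sgeo (t : ℝ) (A B : Matrix n n ℂ) : Matrix n n ℂ :=
  mpow (geo A⁻¹ B) t * A * mpow (geo A⁻¹ B) t

/-- Semi-metric `d(A,B) = 2 ‖log (A⁻¹ # B)‖` (operator norm). -/
noncomputable def dsm (A B : Matrix n n ℂ) : ℝ :=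
  2 * ‖mlog (geo A⁻¹ B)‖

/-- Loewner order: `Loewner A B` means `A ≤ B`, i.e. `B - A` is positive semidefinite. -/
def Loewner (A B : Matrix n n ℂ) : Prop := (B - A).PosSemidef

/-! ### Auxiliary lemmas -/

/-- Any real function is continuous on the (finite) real spectrum of a matrix. -/
lemma contOn (f : ℝ → ℝ) (A : Matrix n n ℂ) : ContinuousOn f (spectrum ℝ A) := by
  rw [continuousOn_iff_continuous_restrict]
  exact continuous_of_discreteTopology

lemma contOn' (f : ℝ → ℝ) (s : Set ℝ) (hs : s.Finite) : ContinuousOn f s := by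
  have := hs.to_subtype
  rw [continuousOn_iff_continuous_restrict]
  exact continuous_of_discreteTopology

/-- The real spectrum of a positive definite matrix consists of positive reals. -/
lemma spd {A : Matrix n n ℂ} (hA : A.PosDef) : ∀ x ∈ spectrum ℝ A, 0 < x := by
  rw [hA.isHermitian.spectrum_real_eq_range_eigenvalues]
  rintro x ⟨i, rfl⟩
  exact hA.eigenvalues_pos i

open Matrix in
lemma posDef_conj' {D : Matrix n n ℂ} (hD : D.PosDef) {U : Matrix n n ℂ} (hU : IsUnit U) :
    (Uᴴ * D * U).PosDef := by
  refine Matrix.PosDef.of_dotProduct_mulVec_pos (Matrix.isHermitian_conjTranspose_mul_mul U hD.isHermitian) fun x hx => ?_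
  have hx' : U *ᵥ x ≠ 0 :=
    (Matrix.mulVec_injective_iff_isUnit.mpr hU |>.ne_iff' (Matrix.mulVec_zero U)).2 hx
  simpa only [Matrix.star_mulVec, Matrix.dotProduct_mulVec, Matrix.vecMul_vecMul]
    using hD.dotProduct_mulVec_pos hx'

open Matrix in
lemma posDef_conj {D : Matrix n n ℂ} (hD : D.PosDef) {U : Matrix n n ℂ} (hU : IsUnit U) :
    (U * D * Uᴴ).PosDef := by
  have hU' : IsUnit Uᴴ := by
    simpa [Matrix.isUnit_iff_isUnit_det, Matrix.det_conjTranspose] using hU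
  simpa using posDef_conj' hD hU'

lemma posDef_conj_posDef {D P : Matrix n n ℂ} (hD : D.PosDef) (hP : P.PosDef) :
    (P * D * P).PosDef := by
  have h := posDef_conj hD hP.isUnit
  rwa [hP.isHermitian.eq] at h

/-- `cfc f A` is positive definite when `A` is and `f` is positive on the spectrum. -/
lemma cfc_posDef {A : Matrix n n ℂ} (hA : A.PosDef) {f : ℝ → ℝ}
    (hf : ∀ x ∈ spectrum ℝ A, 0 < f x) : (cfc f A).PosDef := by
  rw [hA.isHermitian.cfc_eq, Matrix.IsHermitian.cfc]
  refine posDef_conj ?_ ?_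
  · rw [Matrix.posDef_diagonal_iff]
    intro i
    have := hf _ (hA.isHermitian.eigenvalues_mem_spectrum_real i)
    simpa using this
  · exact (Unitary.toUnits (Matrix.IsHermitian.eigenvectorUnitary hA.isHermitian)).isUnit

lemma mpow_posDef {A : Matrix n n ℂ} (hA : A.PosDef) (t : ℝ) : (mpow A t).PosDef :=
  cfc_posDef hA fun x hx => Real.rpow_pos_of_pos (spd hA x hx) t

lemma mpow_one {A : Matrix n n ℂ} (hA : A.PosDef) : mpow A 1 = A := by
  have h : IsSelfAdjoint A := hA.isHermitian
  rw [mpow]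
  calc cfc (fun x : ℝ => x ^ (1:ℝ)) A = cfc (id : ℝ → ℝ) A :=
        cfc_congr fun x _ => Real.rpow_one x
    _ = A := cfc_id ℝ A

lemma mpow_mul {A : Matrix n n ℂ} (hA : A.PosDef) (s r : ℝ) :
    mpow A s * mpow A r = mpow A (s + r) := by
  have h : IsSelfAdjoint A := hA.isHermitian
  rw [mpow, mpow, mpow, ← cfc_mul _ _ A (contOn _ A) (contOn _ A)]
  exact cfc_congr fun x hx => (Real.rpow_add (spd hA x hx) s r).symm

lemma mpow_mpow {A : Matrix n n ℂ} (hA : A.PosDef) (s r : ℝ) :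
    mpow (mpow A s) r = mpow A (s * r) := by
  have h : IsSelfAdjoint A := hA.isHermitian
  rw [mpow, mpow, mpow,
    ← cfc_comp' _ _ A (contOn' _ _ ((Matrix.finite_real_spectrum (A := A)).image _)) (contOn _ A)]
  exact cfc_congr fun x hx => (Real.rpow_mul (spd hA x hx).le s r).symm

lemma mpow_half_mul_half {A : Matrix n n ℂ} (hA : A.PosDef) :
    mpow A (1/2) * mpow A (1/2) = A := by
  rw [mpow_mul hA]; norm_num; exact mpow_one hA

lemma mpow_neg_half_mul_half {A : Matrix n n ℂ} (hA : A.PosDef) :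
    mpow A (-(1/2)) * mpow A (1/2) = 1 := by
  have h : IsSelfAdjoint A := hA.isHermitian
  rw [mpow_mul hA]; norm_num
  rw [mpow]
  calc cfc (fun x : ℝ => x ^ (0:ℝ)) A = cfc (fun _ : ℝ => (1:ℝ)) A :=
        cfc_congr fun x _ => Real.rpow_zero x
    _ = 1 := cfc_const_one ℝ A

lemma mpow_half_mul_neg_half {A : Matrix n n ℂ} (hA : A.PosDef) :
    mpow A (1/2) * mpow A (-(1/2)) = 1 := by
  have h := mpow_neg_half_mul_half hA
  rw [mpow_mul hA] at h ⊢
  rw [show (1/2 + -(1/2) : ℝ) = -(1/2) + 1/2 by ring]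
  exact h

lemma inv_eq_cfc {A : Matrix n n ℂ} (hA : A.PosDef) :
    A⁻¹ = cfc (fun x : ℝ => x⁻¹) A := by
  have h : IsSelfAdjoint A := hA.isHermitian
  refine Matrix.inv_eq_left_inv ?_
  calc cfc (fun x : ℝ => x⁻¹) A * A
      = cfc (fun x : ℝ => x⁻¹) A * cfc (id : ℝ → ℝ) A := by rw [cfc_id ℝ A]
    _ = cfc (fun x : ℝ => x⁻¹ * x) A := (cfc_mul _ _ A (contOn _ A) (contOn _ A)).symm
    _ = cfc (fun _ : ℝ => (1:ℝ)) A :=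
        cfc_congr fun x hx => inv_mul_cancel₀ (spd hA x hx).ne'
    _ = 1 := cfc_const_one ℝ A

lemma mpow_inv {A : Matrix n n ℂ} (hA : A.PosDef) (t : ℝ) :
    mpow A⁻¹ t = mpow A (-t) := by
  have h : IsSelfAdjoint A := hA.isHermitian
  rw [mpow, inv_eq_cfc hA,
    ← cfc_comp' _ _ A (contOn' _ _ ((Matrix.finite_real_spectrum (A := A)).image _)) (contOn _ A)]
  exact cfc_congr fun x hx => by
    have hx' := spd hA x hx
    rw [← Real.rpow_neg_one x, ← Real.rpow_mul hx'.le]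
    ring_nf

lemma geo_inv_eq {A : Matrix n n ℂ} (B : Matrix n n ℂ) (hA : A.PosDef) :
    geo A⁻¹ B = mpow A (-(1/2)) * mpow (mpow A (1/2) * B * mpow A (1/2)) (1/2)
      * mpow A (-(1/2)) := by
  rw [geo, mpow_inv hA, mpow_inv hA, neg_neg]

lemma geo_inv_posDef {A B : Matrix n n ℂ} (hA : A.PosDef) (hB : B.PosDef) :
    (geo A⁻¹ B).PosDef := by
  rw [geo_inv_eq B hA]
  exact posDef_conj_posDef
    (mpow_posDef (posDef_conj_posDef hB (mpow_posDef hA (1/2))) (1/2))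
    (mpow_posDef hA (-(1/2)))

lemma sqrt_sq {X : Matrix n n ℂ} (hX : X.PosDef) : mpow (X * X) (1/2) = X := by
  have h1 : X * X = mpow X 2 := by
    have h := mpow_mul hX 1 1
    rw [mpow_one hX] at h
    rw [h]; norm_num
  rw [h1, mpow_mpow hX]
  norm_num
  exact mpow_one hX

/-- The Riccati property: `A⁻¹ # (X A X) = X`. -/
lemma riccati {A X : Matrix n n ℂ} (hA : A.PosDef) (hX : X.PosDef) :
    geo A⁻¹ (X * A * X) = X := by
  rw [geo_inv_eq _ hA]
  set H := mpow A (1/2) with hH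
  set Hm := mpow A (-(1/2)) with hHm
  have hHpd : H.PosDef := mpow_posDef hA (1/2)
  have hhh : H * H = A := mpow_half_mul_half hA
  have h1 : H * Hm = 1 := mpow_half_mul_neg_half hA
  have h2 : Hm * H = 1 := mpow_neg_half_mul_half hA
  have key : H * (X * A * X) * H = (H * X * H) * (H * X * H) := by
    rw [← hhh]; noncomm_ring
  rw [key, sqrt_sq (posDef_conj_posDef hX hHpd)]
  calc Hm * (H * X * H) * Hm = (Hm * H) * X * (H * Hm) := by noncomm_ring
    _ = X := by rw [h1, h2, one_mul, mul_one]

/-- `G = A⁻¹ # B` satisfies `G A G = B`. -/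
lemma geo_conj {A B : Matrix n n ℂ} (hA : A.PosDef) (hB : B.PosDef) :
    geo A⁻¹ B * A * geo A⁻¹ B = B := by
  rw [geo_inv_eq B hA]
  set H := mpow A (1/2) with hH
  set Hm := mpow A (-(1/2)) with hHm
  set S := mpow (H * B * H) (1/2) with hSdef
  have hhh : H * H = A := mpow_half_mul_half hA
  have h1 : H * Hm = 1 := mpow_half_mul_neg_half hA
  have h2 : Hm * H = 1 := mpow_neg_half_mul_half hA
  have hS : S * S = H * B * H :=
    mpow_half_mul_half (posDef_conj_posDef hB (mpow_posDef hA (1/2)))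
  have hAm : Hm * A * Hm = (Hm * H) * (H * Hm) := by rw [← hhh]; noncomm_ring
  rw [h1, h2, one_mul] at hAm
  calc Hm * S * Hm * A * (Hm * S * Hm)
      = Hm * (S * (Hm * A * Hm) * S) * Hm := by noncomm_ring
    _ = Hm * (S * S) * Hm := by rw [hAm, mul_one]
    _ = Hm * (H * B * H) * Hm := by rw [hS]
    _ = (Hm * H) * B * (H * Hm) := by noncomm_ring
    _ = B := by rw [h1, h2, one_mul, mul_one]

lemma mlog_mpow {G : Matrix n n ℂ} (hG : G.PosDef) (t : ℝ) :
    mlog (mpow G t) = t • mlog G := by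
  have h : IsSelfAdjoint G := hG.isHermitian
  rw [mlog, mpow, ← cfc_comp' Real.log _ G
    (contOn' _ _ ((Matrix.finite_real_spectrum (A := G)).image _)) (contOn _ G)]
  calc cfc (fun x => Real.log (x ^ t)) G = cfc (fun x => t • Real.log x) G :=
      cfc_congr fun x hx => by rw [Real.log_rpow (spd hG x hx)]; rfl
    _ = t • cfc Real.log G := cfc_smul t Real.log G (contOn _ G)

/-- `d(A, A ♮ₜ B) = t d(A,B)` and `d(B, A ♮ₜ B) = (1-t) d(A,B)`. -/
theorem stmt12 (A B : Matrix n n ℂ) (hA : A.PosDef) (hB : B.PosDef)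
    {t : ℝ} (ht : t ∈ Set.Icc (0:ℝ) 1) :
    dsm A (sgeo t A B) = t * dsm A B ∧
    dsm B (sgeo t A B) = (1 - t) * dsm A B := by
  obtain ⟨ht0, ht1⟩ := ht
  have hG : (geo A⁻¹ B).PosDef := geo_inv_posDef hA hB
  set G := geo A⁻¹ B with hGdef
  constructor
  · have h : sgeo t A B = mpow G t * A * mpow G t := rfl
    rw [dsm, h, riccati hA (mpow_posDef hG t), mlog_mpow hG t, norm_smul,
      Real.norm_eq_abs, abs_of_nonneg ht0, dsm]
    ring
  · have e1 : mpow G (t-1) * G = mpow G t := by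
      have h := mpow_mul hG (t-1) 1
      rw [mpow_one hG] at h
      rw [h]; norm_num
    have e2 : G * mpow G (t-1) = mpow G t := by
      have h := mpow_mul hG 1 (t-1)
      rw [mpow_one hG] at h
      rw [h]; norm_num
    have key : sgeo t A B = mpow G (t - 1) * B * mpow G (t - 1) := by
      have h : sgeo t A B = mpow G t * A * mpow G t := rfl
      rw [h]
      nth_rewrite 2 [← e2]
      rw [← e1]
      calc mpow G (t-1) * G * A * (G * mpow G (t-1))
          = mpow G (t-1) * (G * A * G) * mpow G (t-1) := by noncomm_ring
        _ = mpow G (t-1) * B * mpow G (t-1) := by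
            rw [show G * A * G = B from geo_conj hA hB]
    rw [dsm, key, riccati hB (mpow_posDef hG (t-1)), mlog_mpow hG (t-1), norm_smul,
      Real.norm_eq_abs, abs_of_nonpos (by linarith), dsm]
    ring
end

section
/- For positive definite matrices A and B, the following are equivalent: (1) A^{-1} ♮ B ≤ I; (2) A ♮ B^{-1} ≥ I; (3) A # B ≤ A; (4) A # B ≥ B; (5) B ≤ A. -/
open scoped Matrix.Norms.L2Operator ComplexOrder

variable {n : Type*} [Fintype n] [DecidableEq n]

/- ### Auxiliary development -/

open Matrix

noncomputable instance matrixPO : PartialOrder (Matrix n n ℂ) where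
  le A B := (B - A).PosSemidef
  le_refl A := by simpa using Matrix.PosSemidef.zero
  le_trans A B C h1 h2 := by
    have := h2.add h1
    simpa using this
  le_antisymm A B h1 h2 := by
    have key : ∀ x, (B - A) *ᵥ x = 0 := by
      intro x
      rw [← (h1.dotProduct_mulVec_zero_iff x)]
      have e1 := (posSemidef_iff_dotProduct_mulVec.mp h1).2 x
      have e2 := (posSemidef_iff_dotProduct_mulVec.mp h2).2 x
      have hneg : star x ⬝ᵥ (A - B) *ᵥ x = - (star x ⬝ᵥ (B - A) *ᵥ x) := by
        rw [show A - B = -(B - A) by abel, Matrix.neg_mulVec, dotProduct_neg]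
      rw [hneg] at e2
      exact le_antisymm (neg_nonneg.mp e2) e1
    have hz : B - A = 0 := by
      ext i j
      have := congrFun (key (Pi.single j 1)) i
      simpa [Matrix.mulVec_single] using this
    rw [← sub_eq_zero, show A - B = -(B - A) by abel, hz, neg_zero]

lemma matrix_le_iff {A B : Matrix n n ℂ} : A ≤ B ↔ (B - A).PosSemidef := Iff.rfl

lemma matrix_nonneg_iff {A : Matrix n n ℂ} : 0 ≤ A ↔ A.PosSemidef := by
  rw [matrix_le_iff, sub_zero]

noncomputable instance : StarOrderedRing (Matrix n n ℂ) := by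
  refine StarOrderedRing.of_nonneg_iff' ?_ ?_
  · intro a b hab c
    rw [matrix_le_iff] at hab ⊢
    simpa using hab
  · intro x
    rw [matrix_nonneg_iff]
    open scoped MatrixOrder in
    exact (Matrix.nonneg_iff_posSemidef (A := x)).symm.trans CStarAlgebra.nonneg_iff_eq_star_mul_self

noncomputable instance : CStarAlgebra (Matrix n n ℂ) where
  complete := (FiniteDimensional.complete ℂ (Matrix n n ℂ)).complete

lemma loewner_iff {A B : Matrix n n ℂ} : Loewner A B ↔ A ≤ B := Iff.rfl

section lemmas

variable {M X Y C : Matrix n n ℂ}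

lemma spec_pos (hM : M.PosDef) : ∀ x ∈ spectrum ℝ M, (0:ℝ) < x := by
  intro x hx
  rw [hM.isHermitian.spectrum_real_eq_range_eigenvalues] at hx
  obtain ⟨i, rfl⟩ := hx
  exact hM.eigenvalues_pos i

lemma posDef_isSelfAdjoint (hM : M.PosDef) : IsSelfAdjoint M := hM.isHermitian

lemma contOn_rpow (t : ℝ) {s : Set ℝ} (hs : ∀ x ∈ s, (0:ℝ) < x) :
    ContinuousOn (fun x : ℝ => x ^ t) s :=
  fun x hx => (Real.continuousAt_rpow_const x t (Or.inl (hs x hx).ne')).continuousWithinAt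

lemma contOn_s14 (hM : M.PosDef) (t : ℝ) :
    ContinuousOn (fun x : ℝ => x ^ t) (spectrum ℝ M) :=
  contOn_rpow t (spec_pos hM)

lemma mpow_isSelfAdjoint (M : Matrix n n ℂ) (t : ℝ) : IsSelfAdjoint (mpow M t) :=
  cfc_predicate _ _

lemma mpow_herm (M : Matrix n n ℂ) (t : ℝ) : (mpow M t)ᴴ = mpow M t := by
  rw [← Matrix.star_eq_conjTranspose]
  exact (mpow_isSelfAdjoint M t).star_eq

lemma mpow_mul_s14 (hM : M.PosDef) (s t : ℝ) : mpow M s * mpow M t = mpow M (s + t) := by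
  unfold mpow
  rw [← cfc_mul _ _ M (contOn_s14 hM s) (contOn_s14 hM t)]
  exact cfc_congr fun x hx => (Real.rpow_add (spec_pos hM x hx) s t).symm

lemma mpow_zero (hM : M.PosDef) : mpow M 0 = 1 := by
  have hsa : IsSelfAdjoint M := posDef_isSelfAdjoint hM
  have h1 : mpow M 0 = cfc (fun _ : ℝ => (1:ℝ)) M := cfc_congr fun x _ => Real.rpow_zero x
  rw [h1, cfc_const_one ℝ M]

lemma mpow_one_s14 (hM : M.PosDef) : mpow M 1 = M := by
  have hsa : IsSelfAdjoint M := posDef_isSelfAdjoint hM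
  have h1 : mpow M 1 = cfc (fun x : ℝ => x) M := cfc_congr fun x _ => Real.rpow_one x
  rw [h1, cfc_id' ℝ M]

lemma mpow_isUnit (hM : M.PosDef) (t : ℝ) : IsUnit (mpow M t) := by
  have h1 : mpow M t * mpow M (-t) = 1 := by rw [mpow_mul_s14 hM, add_neg_cancel, mpow_zero hM]
  have h2 : mpow M (-t) * mpow M t = 1 := by rw [mpow_mul_s14 hM, neg_add_cancel, mpow_zero hM]
  exact ⟨⟨mpow M t, mpow M (-t), h1, h2⟩, rfl⟩

lemma posDef_of_psd_isUnit (h : M.PosSemidef) (hu : IsUnit M) : M.PosDef := by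
  refine posDef_iff_dotProduct_mulVec.mpr
    ⟨h.1, fun x hx => lt_of_le_of_ne ((posSemidef_iff_dotProduct_mulVec.mp h).2 x) (Ne.symm fun h0 => hx ?_)⟩
  have hMx : M *ᵥ x = 0 := (h.dotProduct_mulVec_zero_iff x).mp h0
  have hdet := (Matrix.isUnit_iff_isUnit_det M).mp hu
  have hx1 : x = (M⁻¹ * M) *ᵥ x := by rw [Matrix.nonsing_inv_mul _ hdet, Matrix.one_mulVec]
  rw [hx1, ← Matrix.mulVec_mulVec, hMx, Matrix.mulVec_zero]

lemma mpow_posDef_s14 (hM : M.PosDef) (t : ℝ) : (mpow M t).PosDef := by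
  refine posDef_of_psd_isUnit ?_ (mpow_isUnit hM t)
  rw [← matrix_nonneg_iff]
  exact cfc_nonneg fun x hx => Real.rpow_nonneg (spec_pos hM x hx).le t

lemma mpow_inv_s14 (hM : M.PosDef) (t : ℝ) : (mpow M t)⁻¹ = mpow M (-t) :=
  Matrix.inv_eq_left_inv (by rw [mpow_mul_s14 hM (-t) t, neg_add_cancel, mpow_zero hM])

lemma mpow_neg_one (hM : M.PosDef) : mpow M (-1) = M⁻¹ := by
  rw [← mpow_inv_s14 hM 1, mpow_one_s14 hM]

lemma inv_mpow (hM : M.PosDef) (t : ℝ) : mpow M⁻¹ t = mpow M (-t) := by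
  have hsa : IsSelfAdjoint M := posDef_isSelfAdjoint hM
  have h1 : M⁻¹ = cfc (fun x : ℝ => x ^ (-1 : ℝ)) M := (mpow_neg_one hM).symm
  have himg : ∀ y ∈ (fun x : ℝ => x ^ (-1:ℝ)) '' spectrum ℝ M, (0:ℝ) < y := by
    rintro y ⟨x, hx, rfl⟩
    exact Real.rpow_pos_of_pos (spec_pos hM x hx) _
  unfold mpow
  rw [h1, ← cfc_comp (fun x : ℝ => x ^ t) (fun x : ℝ => x ^ (-1:ℝ)) M hsa
    (contOn_rpow t himg) (contOn_s14 hM _)]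
  exact cfc_congr fun x hx => by
    show (x ^ (-1:ℝ)) ^ t = x ^ (-t)
    rw [← Real.rpow_mul (spec_pos hM x hx).le, neg_one_mul]

lemma mpow_sandwich_self (hM : M.PosDef) (r t : ℝ) :
    mpow M r * M * mpow M t = mpow M (r + 1 + t) := by
  nth_rewrite 2 [← mpow_one_s14 hM]
  rw [mpow_mul_s14 hM, mpow_mul_s14 hM]

lemma mul_sub_mul_conj (C X Y : Matrix n n ℂ) :
    C * Y * C - C * X * C = C * (Y - X) * C := by
  rw [Matrix.mul_sub, Matrix.sub_mul]

lemma conj_le_conj_iff (hC : IsUnit C) (hCh : Cᴴ = C) :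
    C * X * C ≤ C * Y * C ↔ X ≤ Y := by
  have hdet : IsUnit C.det := (Matrix.isUnit_iff_isUnit_det C).mp hC
  constructor
  · intro h
    rw [matrix_le_iff, mul_sub_mul_conj] at h
    rw [matrix_le_iff]
    have h2 := h.conjTranspose_mul_mul_same (B := C⁻¹)
    rw [Matrix.conjTranspose_nonsing_inv, hCh] at h2
    have e : C⁻¹ * (C * (Y - X) * C) * C⁻¹ = Y - X := by
      simp only [← Matrix.mul_assoc]
      rw [Matrix.nonsing_inv_mul _ hdet, Matrix.one_mul, Matrix.mul_assoc,
        Matrix.mul_nonsing_inv _ hdet, Matrix.mul_one]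
    rwa [e] at h2
  · intro h
    rw [matrix_le_iff] at h
    rw [matrix_le_iff, mul_sub_mul_conj]
    have h2 := h.conjTranspose_mul_mul_same (B := C)
    rwa [hCh] at h2

lemma conj_posDef (hC : IsUnit C) (hCh : Cᴴ = C) (hX : X.PosDef) : (C * X * C).PosDef := by
  refine posDef_of_psd_isUnit ?_ ((hC.mul hX.isUnit).mul hC)
  have := hX.posSemidef.conjTranspose_mul_mul_same (B := C)
  rwa [hCh] at this

lemma le_one_iff (hM : M.PosDef) : M ≤ 1 ↔ ∀ x ∈ spectrum ℝ M, x ≤ 1 := by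
  have hsa : IsSelfAdjoint M := posDef_isSelfAdjoint hM
  have := le_algebraMap_iff_spectrum_le (r := (1:ℝ)) (a := M) hsa
  rwa [_root_.map_one] at this

lemma mpow_le_one_iff (hM : M.PosDef) (t : ℝ) :
    mpow M t ≤ 1 ↔ ∀ x ∈ spectrum ℝ M, x ^ t ≤ 1 := by
  have hsa : IsSelfAdjoint M := posDef_isSelfAdjoint hM
  have := cfc_le_algebraMap_iff (fun x : ℝ => x ^ t) 1 M (contOn_s14 hM t) hsa
  rw [_root_.map_one] at this
  exact this

lemma one_le_mpow_iff (hM : M.PosDef) (t : ℝ) :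
    1 ≤ mpow M t ↔ ∀ x ∈ spectrum ℝ M, 1 ≤ x ^ t := by
  have hsa : IsSelfAdjoint M := posDef_isSelfAdjoint hM
  have := algebraMap_le_cfc_iff (fun x : ℝ => x ^ t) 1 M (contOn_s14 hM t) hsa
  rw [_root_.map_one] at this
  exact this

lemma le_mpow_iff (hM : M.PosDef) (t : ℝ) :
    M ≤ mpow M t ↔ ∀ x ∈ spectrum ℝ M, x ≤ x ^ t := by
  have hsa : IsSelfAdjoint M := posDef_isSelfAdjoint hM
  have h := cfc_le_iff (fun x : ℝ => x) (fun x : ℝ => x ^ t) M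
    continuous_id.continuousOn (contOn_s14 hM t) hsa
  rwa [cfc_id' ℝ M] at h

lemma inv_antitone (hX : X.PosDef) (hY : Y.PosDef) (h : X ≤ Y) : Y⁻¹ ≤ X⁻¹ := by
  set P := mpow Y (-(1/2)) with hPdef
  set Q := mpow Y (1/2) with hQdef
  have hPu : IsUnit P := mpow_isUnit hY _
  have hPh : Pᴴ = P := mpow_herm Y _
  have hQu : IsUnit Q := mpow_isUnit hY _
  have hQh : Qᴴ = Q := mpow_herm Y _
  have hPQ : P⁻¹ = Q := by rw [hPdef, hQdef, mpow_inv_s14 hY, neg_neg]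
  have h1 : P * X * P ≤ 1 := by
    have h2 := (conj_le_conj_iff (X := X) (Y := Y) hPu hPh).mpr h
    rwa [mpow_sandwich_self hY, show (-(1/2) + 1 + -(1/2) : ℝ) = 0 by norm_num,
      mpow_zero hY] at h2
  have hR : (P * X * P).PosDef := conj_posDef hPu hPh hX
  have h3 : 1 ≤ mpow (P * X * P) (-1) := by
    rw [one_le_mpow_iff hR]
    intro x hx
    have hx0 := spec_pos hR x hx
    have hx1 := (le_one_iff hR).mp h1 x hx
    rw [Real.rpow_neg_one, ← one_div]
    exact one_le_one_div hx0 hx1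
  rw [mpow_neg_one hR, Matrix.mul_inv_rev, Matrix.mul_inv_rev, hPQ] at h3
  have h4 : Q * Y⁻¹ * Q ≤ Q * X⁻¹ * Q := by
    have e1 : Q * (X⁻¹ * Q) = Q * X⁻¹ * Q := by rw [Matrix.mul_assoc]
    have e2 : Q * Y⁻¹ * Q = 1 := by
      rw [← mpow_neg_one hY, hQdef, mpow_mul_s14 hY, mpow_mul_s14 hY,
        show (1/2 + -1 + 1/2 : ℝ) = 0 by norm_num, mpow_zero hY]
    rw [e2, ← e1]
    exact h3
  exact (conj_le_conj_iff hQu hQh).mp h4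

lemma inv_le_inv_iff' (hX : X.PosDef) (hY : Y.PosDef) : Y⁻¹ ≤ X⁻¹ ↔ X ≤ Y := by
  constructor
  · intro h
    have := inv_antitone hY.inv hX.inv h
    rwa [Matrix.nonsing_inv_nonsing_inv _ ((Matrix.isUnit_iff_isUnit_det X).mp hX.isUnit),
      Matrix.nonsing_inv_nonsing_inv _ ((Matrix.isUnit_iff_isUnit_det Y).mp hY.isUnit)] at this
  · exact inv_antitone hX hY

end lemmas

section main

variable {A B : Matrix n n ℂ}

lemma inner_posDef (hA : A.PosDef) (hB : B.PosDef) :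
    (mpow A (-(1/2)) * B * mpow A (-(1/2))).PosDef :=
  conj_posDef (mpow_isUnit hA _) (mpow_herm A _) hB

lemma geo_posDef (hA : A.PosDef) (hB : B.PosDef) : (geo A B).PosDef :=
  conj_posDef (mpow_isUnit hA _) (mpow_herm A _) (mpow_posDef_s14 (inner_posDef hA hB) _)

lemma B_le_A_iff_inner (hA : A.PosDef) :
    B ≤ A ↔ mpow A (-(1/2)) * B * mpow A (-(1/2)) ≤ mpow A (-(1/2)) * A * mpow A (-(1/2)) :=
  (conj_le_conj_iff (X := B) (Y := A) (mpow_isUnit hA (-(1/2))) (mpow_herm A _)).symm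

lemma B_le_A_iff (hA : A.PosDef) :
    B ≤ A ↔ mpow A (-(1/2)) * B * mpow A (-(1/2)) ≤ 1 := by
  have h := B_le_A_iff_inner (B := B) hA
  rwa [mpow_sandwich_self hA, show (-(1/2) + 1 + -(1/2) : ℝ) = 0 by norm_num,
    mpow_zero hA] at h

lemma key35 (hA : A.PosDef) (hB : B.PosDef) : geo A B ≤ A ↔ B ≤ A := by
  set C' := mpow A (-(1/2)) * B * mpow A (-(1/2)) with hC'
  have hC : C'.PosDef := inner_posDef hA hB
  have e1 : geo A B ≤ A ↔ mpow C' (1/2) ≤ 1 := by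
    have h := conj_le_conj_iff (X := mpow C' (1/2)) (Y := 1)
      (mpow_isUnit hA (1/2)) (mpow_herm A _)
    rw [Matrix.mul_one, mpow_mul_s14 hA, show (1/2 + 1/2 : ℝ) = 1 by norm_num, mpow_one_s14 hA] at h
    exact h
  rw [e1, mpow_le_one_iff hC, B_le_A_iff hA, ← hC', le_one_iff hC]
  constructor
  · intro h x hx
    by_contra hgt
    push_neg at hgt
    have h2 : (1:ℝ) < x ^ (1/2 : ℝ) :=
      (Real.one_lt_rpow_iff_of_pos (spec_pos hC x hx)).mpr (Or.inl ⟨hgt, by norm_num⟩)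
    linarith [h x hx]
  · intro h x hx
    exact Real.rpow_le_one (spec_pos hC x hx).le (h x hx) (by norm_num)

lemma key45 (hA : A.PosDef) (hB : B.PosDef) : B ≤ geo A B ↔ B ≤ A := by
  set C' := mpow A (-(1/2)) * B * mpow A (-(1/2)) with hC'
  have hC : C'.PosDef := inner_posDef hA hB
  have e1 : B ≤ geo A B ↔ C' ≤ mpow C' (1/2) := by
    have h := conj_le_conj_iff (X := B) (Y := geo A B)
      (mpow_isUnit hA (-(1/2))) (mpow_herm A _)
    have hmid : mpow A (-(1/2)) * geo A B * mpow A (-(1/2)) = mpow C' (1/2) := by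
      show mpow A (-(1/2)) * (mpow A (1/2) * mpow C' (1/2) * mpow A (1/2)) *
        mpow A (-(1/2)) = _
      have c1 : mpow A (-(1/2)) * mpow A (1/2) = 1 := by
        rw [mpow_mul_s14 hA, show (-(1/2) + 1/2 : ℝ) = 0 by norm_num, mpow_zero hA]
      have c2 : mpow A (1/2) * mpow A (-(1/2)) = 1 := by
        rw [mpow_mul_s14 hA, show (1/2 + -(1/2) : ℝ) = 0 by norm_num, mpow_zero hA]
      simp only [← Matrix.mul_assoc]
      rw [c1, Matrix.one_mul, Matrix.mul_assoc, c2, Matrix.mul_one]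
    rw [hmid] at h
    exact h.symm
  rw [e1, le_mpow_iff hC, B_le_A_iff hA, ← hC', le_one_iff hC]
  constructor
  · intro h x hx
    by_contra hgt
    push_neg at hgt
    have h2 : x ^ ((1/2):ℝ) < x := by
      nth_rewrite 2 [← Real.rpow_one x]
      exact Real.rpow_lt_rpow_of_exponent_lt hgt (by norm_num)
    linarith [h x hx]
  · intro h x hx
    have hx0 := spec_pos hC x hx
    nth_rewrite 1 [← Real.rpow_one x]
    exact Real.rpow_le_rpow_of_exponent_ge hx0 (h x hx) (by norm_num)

lemma key13 (hA : A.PosDef) (hB : B.PosDef) : sgeo (1/2) A⁻¹ B ≤ 1 ↔ geo A B ≤ A := by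
  have hG : (geo A B).PosDef := geo_posDef hA hB
  have hAinv : (A⁻¹)⁻¹ = A :=
    Matrix.nonsing_inv_nonsing_inv A ((Matrix.isUnit_iff_isUnit_det A).mp hA.isUnit)
  have e0 : sgeo (1/2) A⁻¹ B = mpow (geo A B) (1/2) * A⁻¹ * mpow (geo A B) (1/2) := by
    unfold sgeo
    rw [hAinv]
  have e1 : mpow (geo A B) (1/2) * A⁻¹ * mpow (geo A B) (1/2) ≤ 1 ↔ A⁻¹ ≤ (geo A B)⁻¹ := by
    have h := conj_le_conj_iff (X := A⁻¹) (Y := (geo A B)⁻¹)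
      (mpow_isUnit hG (1/2)) (mpow_herm (geo A B) _)
    have hone : mpow (geo A B) (1/2) * (geo A B)⁻¹ * mpow (geo A B) (1/2) = 1 := by
      rw [← mpow_neg_one hG, mpow_mul_s14 hG, mpow_mul_s14 hG,
        show (1/2 + -1 + 1/2 : ℝ) = 0 by norm_num, mpow_zero hG]
    rw [hone] at h
    exact h
  rw [e0, e1]
  exact inv_le_inv_iff' hG hA

lemma geo_inv (hA : A.PosDef) (hB : B.PosDef) : geo A⁻¹ B⁻¹ = (geo A B)⁻¹ := by
  set C' := mpow A (-(1/2)) * B * mpow A (-(1/2)) with hC'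
  have hC : C'.PosDef := inner_posDef hA hB
  have m1 : mpow A⁻¹ (1/2) = mpow A (-(1/2)) := inv_mpow hA _
  have m2 : mpow A⁻¹ (-(1/2)) = mpow A (1/2) := by rw [inv_mpow hA, neg_neg]
  have hSainv : (mpow A (-(1/2)))⁻¹ = mpow A (1/2) := by rw [mpow_inv_s14 hA, neg_neg]
  have hinner : mpow A (1/2) * B⁻¹ * mpow A (1/2) = C'⁻¹ := by
    rw [hC', Matrix.mul_inv_rev, Matrix.mul_inv_rev, hSainv, ← Matrix.mul_assoc]
  have hGinv : (geo A B)⁻¹ = mpow A (-(1/2)) * mpow C' (-(1/2)) * mpow A (-(1/2)) := by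
    show (mpow A (1/2) * mpow C' (1/2) * mpow A (1/2))⁻¹ = _
    rw [Matrix.mul_inv_rev, Matrix.mul_inv_rev, mpow_inv_s14 hA, mpow_inv_s14 hC,
      ← Matrix.mul_assoc]
  show mpow A⁻¹ (1/2) * mpow (mpow A⁻¹ (-(1/2)) * B⁻¹ * mpow A⁻¹ (-(1/2))) (1/2) *
      mpow A⁻¹ (1/2) = _
  rw [m1, m2, hinner, inv_mpow hC, hGinv]

lemma key23 (hA : A.PosDef) (hB : B.PosDef) : 1 ≤ sgeo (1/2) A B⁻¹ ↔ geo A B ≤ A := by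
  have hG : (geo A B).PosDef := geo_posDef hA hB
  have e0 : sgeo (1/2) A B⁻¹ =
      mpow (geo A B) (-(1/2)) * A * mpow (geo A B) (-(1/2)) := by
    unfold sgeo
    rw [geo_inv hA hB, inv_mpow hG]
  have h := conj_le_conj_iff (X := geo A B) (Y := A)
    (mpow_isUnit hG (-(1/2))) (mpow_herm (geo A B) _)
  rw [mpow_sandwich_self hG, show (-(1/2) + 1 + -(1/2) : ℝ) = 0 by norm_num,
    mpow_zero hG] at h
  rw [e0]
  exact h

end main

/-- equivalence of five order conditions for positive definite
`A, B`. -/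
theorem stmt14 (A B : Matrix n n ℂ) (hA : A.PosDef) (hB : B.PosDef) :
    [Loewner (sgeo (1/2) A⁻¹ B) 1,
     Loewner 1 (sgeo (1/2) A B⁻¹),
     Loewner (geo A B) A,
     Loewner B (geo A B),
     Loewner B A].TFAE := by
  tfae_have 1 ↔ 3 := by rw [loewner_iff, loewner_iff]; exact key13 hA hB
  tfae_have 2 ↔ 3 := by rw [loewner_iff, loewner_iff]; exact key23 hA hB
  tfae_have 3 ↔ 5 := by rw [loewner_iff, loewner_iff]; exact key35 hA hB
  tfae_have 4 ↔ 5 := by rw [loewner_iff, loewner_iff]; exact key45 hA hB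
  tfae_finish
end
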